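/- Consider two agents on the segment [0,3] (the 4-node path with three unit edges), agent 1 at position 1 and agent 2 at position 2, with energies e_1 = 3 + ε and e_2 = 1 − ε for some 0 < ε < 1. Then: (a) there is no exploration of [0,3] without energy sharing, i.e., for any continuous trajectories f_1, f_2 : [0,T] → ℝ with f_1(0)=1, f_2(0)=2, Var(f_1;[0,T]) ≤ 3+ε and Var(f_2;[0,T]) ≤ 1−ε, the union of their images does not contain [0,3]; but (b) there exists a valid energy-sharing strategy that explores [0,3]. -/

import Mathlib

/-- Energy-sharing exploration strategy on the line for `k` agents with initial
positions `s` and initial energies `e`. -/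
structure LineStrategy (k : ℕ) (s e : Fin k → ℝ) where
  /-- time horizon -/
  T : ℝ
  hT : 0 ≤ T
  /-- trajectories of the agents -/
  f : Fin k → ℝ → ℝ
  cont : ∀ i, ContinuousOn (f i) (Set.Icc 0 T)
  start : ∀ i, f i 0 = s i
  /-- number of transfer events -/
  n : ℕ
  /-- times of the transfer events -/
  time : Fin n → ℝ
  time_mem : ∀ j, time j ∈ Set.Icc 0 T
  /-- giver of each transfer event -/
  giver : Fin n → Fin k
  /-- receiver of each transfer event -/
  receiver : Fin n → Fin k
  giver_ne : ∀ j, giver j ≠ receiver j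
  /-- amount of each transfer event -/
  amount : Fin n → ℝ
  amount_pos : ∀ j, 0 < amount j
  meet : ∀ j, f (giver j) (time j) = f (receiver j) (time j)

open Classical in
/-- Total amount of energy received by agent `i` in events occurring at time `≤ t`. -/
noncomputable def LineStrategy.received {k : ℕ} {s e : Fin k → ℝ}
    (S : LineStrategy k s e) (i : Fin k) (t : ℝ) : ℝ :=
  ∑ j ∈ Finset.univ.filter (fun j => S.time j ≤ t ∧ S.receiver j = i), S.amount j

open Classical in
/-- Total amount of energy given away by agent `i` in events occurring at time `≤ t`. -/
noncomputable def LineStrategy.given {k : ℕ} {s e : Fin k → ℝ}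
    (S : LineStrategy k s e) (i : Fin k) (t : ℝ) : ℝ :=
  ∑ j ∈ Finset.univ.filter (fun j => S.time j ≤ t ∧ S.giver j = i), S.amount j

/-- A strategy is valid if at every time every agent's energy balance dominates the
distance travelled so far (measured by the total variation of its trajectory). -/
def LineStrategy.Valid {k : ℕ} {s e : Fin k → ℝ} (S : LineStrategy k s e) : Prop :=
  ∀ i, ∀ t ∈ Set.Icc 0 S.T,
    eVariationOn (S.f i) (Set.Icc 0 t) ≤
      ENNReal.ofReal (e i + S.received i t - S.given i t)

/-- A strategy explores a set `A` if the images of the trajectories cover `A`. -/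
def LineStrategy.Explores {k : ℕ} {s e : Fin k → ℝ} (S : LineStrategy k s e)
    (A : Set ℝ) : Prop :=
  A ⊆ ⋃ i, S.f i '' Set.Icc 0 S.T

/- ========= auxiliary lemmas ========= -/

lemma evar_neg_aux (f : ℝ → ℝ) (s : Set ℝ) :
    eVariationOn (fun x => -(f x)) s = eVariationOn f s := by
  simp only [eVariationOn]
  congr 1
  ext p
  congr 1
  ext i
  simp [edist_neg_neg]

lemma antitoneOn_evar_le_aux {f : ℝ → ℝ} {s : Set ℝ} (hf : AntitoneOn f s) {a b : ℝ}
    (as : a ∈ s) (bs : b ∈ s) :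
    eVariationOn f (s ∩ Set.Icc a b) ≤ ENNReal.ofReal (f a - f b) := by
  have h : MonotoneOn (fun x => -(f x)) s := fun x hx y hy hxy => neg_le_neg (hf hx hy hxy)
  have h2 := h.eVariationOn_le as bs
  rw [evar_neg_aux] at h2
  convert h2 using 2
  ring

lemma edist_real_aux (a b : ℝ) : edist a b = ENNReal.ofReal |a - b| := by
  rw [edist_dist, Real.dist_eq]

lemma var_f1_le_aux {t : ℝ} (ht : 0 ≤ t) :
    eVariationOn (fun x : ℝ => |min x 3 - 1|) (Set.Icc 0 t) ≤ ENNReal.ofReal 3 := by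
  set f : ℝ → ℝ := fun x => |min x 3 - 1| with hf
  have hanti : AntitoneOn f (Set.Icc (0:ℝ) 1) := by
    intro x hx y hy hxy
    simp only [hf]
    rw [min_eq_left (by linarith [hx.2] : x ≤ (3:ℝ)),
      min_eq_left (by linarith [hy.2] : y ≤ (3:ℝ)),
      abs_of_nonpos (by linarith [hx.2] : x - 1 ≤ 0),
      abs_of_nonpos (by linarith [hy.2] : y - 1 ≤ 0)]
    linarith
  rcases le_total t 1 with h1 | h1
  · have h := antitoneOn_evar_le_aux (hanti.mono (Set.Icc_subset_Icc le_rfl h1))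
      (Set.left_mem_Icc.2 ht) (Set.right_mem_Icc.2 ht)
    rw [Set.inter_self] at h
    refine h.trans (ENNReal.ofReal_le_ofReal ?_)
    have h0 : f 0 = 1 := by norm_num [hf]
    have h2 : 0 ≤ f t := abs_nonneg _
    linarith
  · have hmono : MonotoneOn f (Set.Icc (1:ℝ) t) := by
      intro x hx y hy hxy
      simp only [hf]
      rw [abs_of_nonneg (by rw [sub_nonneg, le_min_iff]; exact ⟨hx.1, by norm_num⟩),
        abs_of_nonneg (by rw [sub_nonneg, le_min_iff]; exact ⟨hy.1, by norm_num⟩)]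
      exact sub_le_sub_right (min_le_min hxy le_rfl) 1
    have hsplit := eVariationOn.Icc_add_Icc f (zero_le_one) h1
      (show (1:ℝ) ∈ Set.Icc 0 t from ⟨zero_le_one, h1⟩) (s := Set.Icc 0 t)
    have i1 : Set.Icc (0:ℝ) t ∩ Set.Icc 0 1 = Set.Icc 0 1 :=
      Set.inter_eq_self_of_subset_right (Set.Icc_subset_Icc le_rfl h1)
    have i2 : Set.Icc (0:ℝ) t ∩ Set.Icc 1 t = Set.Icc 1 t :=
      Set.inter_eq_self_of_subset_right (Set.Icc_subset_Icc zero_le_one le_rfl)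
    have i3 : Set.Icc (0:ℝ) t ∩ Set.Icc 0 t = Set.Icc 0 t := Set.inter_self _
    rw [i1, i2, i3] at hsplit
    rw [← hsplit]
    have p1 : eVariationOn f (Set.Icc (0:ℝ) 1) ≤ ENNReal.ofReal 1 := by
      have h := antitoneOn_evar_le_aux hanti (Set.left_mem_Icc.2 zero_le_one)
        (Set.right_mem_Icc.2 zero_le_one)
      rw [Set.inter_self] at h
      refine h.trans (ENNReal.ofReal_le_ofReal ?_)
      norm_num [hf]
    have p2 : eVariationOn f (Set.Icc (1:ℝ) t) ≤ ENNReal.ofReal 2 := by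
      have h := hmono.eVariationOn_le (Set.left_mem_Icc.2 h1) (Set.right_mem_Icc.2 h1)
      rw [Set.inter_self] at h
      refine h.trans (ENNReal.ofReal_le_ofReal ?_)
      have hf1 : f 1 = 0 := by norm_num [hf]
      have hm : min t 3 ≤ 3 := min_le_right _ _
      have hm1 : (1:ℝ) ≤ min t 3 := le_min h1 (by norm_num)
      simp only [hf] at hf1 ⊢
      rw [hf1, sub_zero, abs_of_nonneg (by linarith)]
      linarith
    calc eVariationOn f (Set.Icc (0:ℝ) 1) + eVariationOn f (Set.Icc 1 t)
        ≤ ENNReal.ofReal 1 + ENNReal.ofReal 2 := add_le_add p1 p2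
      _ = ENNReal.ofReal 3 := by
          rw [← ENNReal.ofReal_add (by norm_num) (by norm_num)]; norm_num

/-- The explicit strategy: agent 0 walks 1 → 0 → 2 (then rests), agent 1 rests at 2,
receives `ε` at time 3, then walks 2 → 3. -/
noncomputable def egStrategy (ε : ℝ) (hε : 0 < ε) : LineStrategy 2 ![1, 2] ![3 + ε, 1 - ε] where
  T := 4
  hT := by norm_num
  f := ![fun t => |min t 3 - 1|, fun t => max (t - 1) 2]
  cont := by
    have h0 : Continuous (fun t : ℝ => |min t 3 - 1|) := by fun_prop
    have h1 : Continuous (fun t : ℝ => max (t - 1) 2) := by fun_prop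
    intro i
    fin_cases i
    · exact h0.continuousOn
    · exact h1.continuousOn
  start := by
    intro i
    fin_cases i <;> norm_num
  n := 1
  time := fun _ => 3
  time_mem := fun _ => by norm_num
  giver := fun _ => 0
  receiver := fun _ => 1
  giver_ne := fun _ => by show (0 : Fin 2) ≠ 1; decide
  amount := fun _ => ε
  amount_pos := fun _ => hε
  meet := fun _ => by norm_num

/-- On the segment `[0,3]`, with agent 1 at position 1 holding energy `3 + ε`
and agent 2 at position 2 holding energy `1 - ε` (`0 < ε < 1`):
(a) exploration of `[0,3]` without energy sharing is impossible, but
(b) there is a valid energy-sharing strategy exploring `[0,3]`. -/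
theorem energy_sharing_helps_on_path (ε : ℝ) (hε : 0 < ε) (hε1 : ε < 1) :
    (∀ (T : ℝ), 0 ≤ T → ∀ f₁ f₂ : ℝ → ℝ,
      ContinuousOn f₁ (Set.Icc 0 T) → ContinuousOn f₂ (Set.Icc 0 T) →
      f₁ 0 = 1 → f₂ 0 = 2 →
      eVariationOn f₁ (Set.Icc 0 T) ≤ ENNReal.ofReal (3 + ε) →
      eVariationOn f₂ (Set.Icc 0 T) ≤ ENNReal.ofReal (1 - ε) →
      ¬ Set.Icc (0 : ℝ) 3 ⊆ f₁ '' Set.Icc 0 T ∪ f₂ '' Set.Icc 0 T) ∧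
    (∃ S : LineStrategy 2 ![1, 2] ![3 + ε, 1 - ε],
      S.Valid ∧ S.Explores (Set.Icc 0 3)) := by
  constructor
  · intro T hT f₁ f₂ hc1 hc2 h10 h20 hv1 hv2 hsub
    have h0T : (0:ℝ) ∈ Set.Icc 0 T := Set.left_mem_Icc.2 hT
    have hf2 : ∀ t ∈ Set.Icc (0:ℝ) T, |f₂ t - 2| ≤ 1 - ε := by
      intro t ht
      have h1 := (eVariationOn.edist_le f₂ ht h0T).trans hv2
      rw [h20, edist_real_aux] at h1
      exact (ENNReal.ofReal_le_ofReal_iff (by linarith)).1 h1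
    obtain ha | ha := hsub (show (0:ℝ) ∈ Set.Icc (0:ℝ) 3 by norm_num)
    swap
    · obtain ⟨t, ht, hft⟩ := ha
      have h := hf2 t ht
      rw [hft] at h
      norm_num at h
      linarith
    obtain hb | hb := hsub (show (3:ℝ) ∈ Set.Icc (0:ℝ) 3 by norm_num)
    swap
    · obtain ⟨t, ht, hft⟩ := hb
      have h := hf2 t ht
      rw [hft] at h
      norm_num at h
      linarith
    obtain ⟨a, haT, hfa⟩ := ha
    obtain ⟨b, hbT, hfb⟩ := hb
    have key : ∀ c d : ℝ, c ∈ Set.Icc 0 T → d ∈ Set.Icc 0 T → c ≤ d →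
        ENNReal.ofReal (|f₁ c - 1| + |f₁ d - f₁ c|) ≤ ENNReal.ofReal (3 + ε) := by
      intro c d hc hd hcd
      have m1 : c ∈ Set.Icc 0 T ∩ Set.Icc 0 c := ⟨hc, hc.1, le_rfl⟩
      have m0 : (0:ℝ) ∈ Set.Icc 0 T ∩ Set.Icc 0 c := ⟨h0T, le_rfl, hc.1⟩
      have m2 : c ∈ Set.Icc 0 T ∩ Set.Icc c d := ⟨hc, le_rfl, hcd⟩
      have m3 : d ∈ Set.Icc 0 T ∩ Set.Icc c d := ⟨hd, hcd, le_rfl⟩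
      have e1 := eVariationOn.edist_le f₁ m1 m0
      have e2 := eVariationOn.edist_le f₁ m3 m2
      have hsum := eVariationOn.Icc_add_Icc f₁ hc.1 hcd hc (s := Set.Icc 0 T)
      calc ENNReal.ofReal (|f₁ c - 1| + |f₁ d - f₁ c|)
          = edist (f₁ c) (f₁ 0) + edist (f₁ d) (f₁ c) := by
            rw [edist_real_aux, edist_real_aux, h10,
              ENNReal.ofReal_add (abs_nonneg _) (abs_nonneg _)]
        _ ≤ eVariationOn f₁ (Set.Icc 0 T ∩ Set.Icc 0 c) +
              eVariationOn f₁ (Set.Icc 0 T ∩ Set.Icc c d) := add_le_add e1 e2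
        _ = eVariationOn f₁ (Set.Icc 0 T ∩ Set.Icc 0 d) := hsum
        _ ≤ eVariationOn f₁ (Set.Icc 0 T) := eVariationOn.mono f₁ Set.inter_subset_left
        _ ≤ ENNReal.ofReal (3 + ε) := hv1
    rcases le_total a b with hab | hab
    · have h := key a b haT hbT hab
      rw [hfa, hfb] at h
      have h2 := (ENNReal.ofReal_le_ofReal_iff (by linarith)).1 h
      norm_num at h2
      linarith
    · have h := key b a hbT haT hab
      rw [hfa, hfb] at h
      have h2 := (ENNReal.ofReal_le_ofReal_iff (by linarith)).1 h
      norm_num at h2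
      linarith
  · refine ⟨egStrategy ε hε, ?_, ?_⟩
    · intro i t ht
      have hT4 : (egStrategy ε hε).T = 4 := rfl
      rw [hT4] at ht
      have hi : i = 0 ∨ i = 1 := by
        rcases i with ⟨_ | _ | n, h⟩
        · left; rfl
        · right; rfl
        · omega
      rcases hi with rfl | rfl
      · have hrecv : (egStrategy ε hε).received 0 t = 0 := by
          simp [LineStrategy.received, egStrategy, Finset.sum_filter]
        have hgiven : (egStrategy ε hε).given 0 t = if 3 ≤ t then ε else 0 := by
          simp only [LineStrategy.given, egStrategy, Finset.sum_filter, Fin.sum_univ_one]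
          split_ifs with h <;> simp_all <;> (show ((Finset.univ : Finset (Fin 1)).card : ℝ) * ε = ε; simp)
        rw [hrecv, hgiven]
        have hf0 : (egStrategy ε hε).f 0 = fun x => |min x 3 - 1| := rfl
        rw [hf0]
        have he0 : (![3 + ε, 1 - ε] : Fin 2 → ℝ) 0 = 3 + ε := rfl
        rw [he0]
        refine (var_f1_le_aux ht.1).trans (ENNReal.ofReal_le_ofReal ?_)
        split_ifs <;> linarith
      · have hrecv : (egStrategy ε hε).received 1 t = if 3 ≤ t then ε else 0 := by
          simp only [LineStrategy.received, egStrategy, Finset.sum_filter, Fin.sum_univ_one]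
          split_ifs with h <;> simp_all <;> (show ((Finset.univ : Finset (Fin 1)).card : ℝ) * ε = ε; simp)
        have hgiven : (egStrategy ε hε).given 1 t = 0 := by
          simp [LineStrategy.given, egStrategy, Finset.sum_filter]
        rw [hrecv, hgiven]
        have hf1 : (egStrategy ε hε).f 1 = fun x => max (x - 1) 2 := rfl
        rw [hf1]
        have he1 : (![3 + ε, 1 - ε] : Fin 2 → ℝ) 1 = 1 - ε := rfl
        rw [he1]
        have hmono : MonotoneOn (fun x : ℝ => max (x - 1) 2) (Set.Icc 0 t) :=
          fun x _ y _ hxy => max_le_max (by linarith) le_rfl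
        have h := hmono.eVariationOn_le (Set.left_mem_Icc.2 ht.1) (Set.right_mem_Icc.2 ht.1)
        rw [Set.inter_self] at h
        refine h.trans (ENNReal.ofReal_le_ofReal ?_)
        have h02 : max (0 - 1 : ℝ) 2 = 2 := by norm_num
        simp only [h02]
        split_ifs with h1
        · have hle : max (t - 1) 2 ≤ 3 := max_le (by linarith [ht.2]) (by norm_num)
          linarith
        · have hle : max (t - 1) 2 ≤ 2 := max_le (by linarith) le_rfl
          linarith
    · intro x hx
      have hT4 : (egStrategy ε hε).T = 4 := rfl
      rcases le_total x 2 with h2 | h2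
      · refine Set.mem_iUnion.2 ⟨0, ⟨x + 1, ⟨by linarith [hx.1], by rw [hT4]; linarith [hx.2]⟩, ?_⟩⟩
        show |min (x + 1) 3 - 1| = x
        rw [min_eq_left (by linarith), add_sub_cancel_right, abs_of_nonneg hx.1]
      · refine Set.mem_iUnion.2 ⟨1, ⟨x + 1, ⟨by linarith [hx.1], by rw [hT4]; linarith [hx.2]⟩, ?_⟩⟩
        show max (x + 1 - 1) 2 = x
        rw [add_sub_cancel_right, max_eq_left h2]
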